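/- Let (V, ‖·‖) be a normed vector space whose closed unit ball is the closed convex hull of its extreme points. Let A ⊆ V admit a conical geodesic bicombing σ, let p₀ ∈ A, and let r ≥ 0 be such that the closed ball B(p₀, 2r) is contained in A. Then σ(p,q,t) = (1−t)p + tq for all p, q ∈ B(p₀, r) and all t ∈ [0,1]. -/

import Mathlib

open Metric Set

/-- If `e` is an extreme point of the unit ball, `0 ≤ c`, `t ∈ [0,1]`, and `η` satisfies
`‖η‖ ≤ t·c·‖e‖` and `‖c•e - η‖ ≤ (1-t)·c·‖e‖`, then `η = (t*c)•e`. -/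
lemma extreme_unique_aux {V : Type*} [NormedAddCommGroup V] [NormedSpace ℝ V]
    {e : V} (he : e ∈ Set.extremePoints ℝ (Metric.closedBall (0:V) 1))
    {c t : ℝ} (hc : 0 ≤ c) (ht0 : 0 ≤ t) (ht1 : t ≤ 1)
    {η : V} (hb1 : ‖η‖ ≤ t * (c * ‖e‖)) (hb2 : ‖c • e - η‖ ≤ (1 - t) * (c * ‖e‖)) :
    η = (t * c) • e := by
  have heball : e ∈ Metric.closedBall (0:V) 1 := he.1
  have hne : ‖e‖ ≤ 1 := by simpa [Metric.mem_closedBall, dist_eq_norm] using heball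
  by_cases hK : c * ‖e‖ = 0
  · have hη0 : η = 0 := by
      have h1 : t * (c * ‖e‖) = 0 := by rw [hK]; ring
      have : ‖η‖ ≤ 0 := by rw [h1] at hb1; exact hb1
      simpa [norm_le_zero_iff] using this
    rcases mul_eq_zero.mp hK with h | h
    · simp [hη0, h]
    · have : e = 0 := norm_eq_zero.mp h
      simp [hη0, this]
  · have hKpos : 0 < c * ‖e‖ := lt_of_le_of_ne (mul_nonneg hc (norm_nonneg _)) (Ne.symm hK)
    have hcpos : 0 < c := by
      rcases lt_or_eq_of_le hc with h | h
      · exact h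
      · exfalso; rw [← h] at hKpos; simp at hKpos
    have hnorm_ce : ‖c • e‖ = c * ‖e‖ := by
      rw [norm_smul, Real.norm_eq_abs, abs_of_nonneg hc]
    have htri : c * ‖e‖ ≤ ‖η‖ + ‖c • e - η‖ := by
      calc c * ‖e‖ = ‖c • e‖ := hnorm_ce.symm
        _ = ‖η + (c • e - η)‖ := by congr 1; abel
        _ ≤ ‖η‖ + ‖c • e - η‖ := norm_add_le _ _
    have heq1 : ‖η‖ = t * (c * ‖e‖) := le_antisymm hb1 (by nlinarith)
    have heq2 : ‖c • e - η‖ = (1 - t) * (c * ‖e‖) := le_antisymm hb2 (by nlinarith)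
    rcases eq_or_lt_of_le ht0 with h | htpos
    · have : ‖η‖ = 0 := by rw [heq1, ← h]; ring
      rw [← h]
      simpa [norm_eq_zero] using this
    rcases eq_or_lt_of_le ht1 with h | htlt
    · have : ‖c • e - η‖ = 0 := by rw [heq2, h]; ring
      have : c • e - η = 0 := norm_eq_zero.mp this
      rw [h, one_mul]
      exact (sub_eq_zero.mp this).symm
    · -- 0 < t < 1
      have htc : t * c ≠ 0 := by positivity
      have htc' : (1 - t) * c ≠ 0 := by
        have : 0 < (1 - t) * c := by nlinarith
        exact ne_of_gt this
      set u : V := (t * c)⁻¹ • η with hu_def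
      set v : V := ((1 - t) * c)⁻¹ • (c • e - η) with hv_def
      have hu : u ∈ Metric.closedBall (0:V) 1 := by
        rw [Metric.mem_closedBall, dist_eq_norm, sub_zero, hu_def, norm_smul,
          Real.norm_eq_abs, abs_of_nonneg (by positivity), heq1]
        calc (t * c)⁻¹ * (t * (c * ‖e‖)) = ‖e‖ := by field_simp
          _ ≤ 1 := hne
      have hv : v ∈ Metric.closedBall (0:V) 1 := by
        rw [Metric.mem_closedBall, dist_eq_norm, sub_zero, hv_def, norm_smul,
          Real.norm_eq_abs, abs_of_nonneg (inv_nonneg.mpr (by nlinarith)), heq2]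
        calc ((1 - t) * c)⁻¹ * ((1 - t) * (c * ‖e‖)) = ‖e‖ := by field_simp
          _ ≤ 1 := hne
      have hseg : e ∈ openSegment ℝ u v := by
        refine ⟨t, 1 - t, htpos, by linarith, by ring, ?_⟩
        rw [hu_def, hv_def, smul_smul, smul_smul]
        have e1 : t * (t * c)⁻¹ = c⁻¹ := by field_simp
        have e2 : (1 - t) * ((1 - t) * c)⁻¹ = c⁻¹ := by field_simp
        rw [e1, e2, ← smul_add]
        have : η + (c • e - η) = c • e := by abel
        rw [this, smul_smul, inv_mul_cancel₀ (ne_of_gt hcpos), one_smul]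
      have hu' := he.2 hu hv hseg
      rw [← hu', hu_def, smul_smul]
      field_simp
      rw [one_smul]

/-- Norm bounds for sums over sublists of a list of pairs `(c, e)` with `0 ≤ c`, `‖e‖ ≤ 1`. -/
lemma sublist_sum_bound {V : Type*} [NormedAddCommGroup V] [NormedSpace ℝ V]
    {l' l : List (ℝ × V)} (h : l'.Sublist l) :
    (∀ x ∈ l, 0 ≤ x.1 ∧ ‖x.2‖ ≤ 1) →
      0 ≤ (l'.map Prod.fst).sum ∧ (l'.map Prod.fst).sum ≤ (l.map Prod.fst).sum ∧
      ‖(l'.map fun x => x.1 • x.2).sum‖ ≤ (l'.map Prod.fst).sum ∧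
      ‖(l.map fun x => x.1 • x.2).sum - (l'.map fun x => x.1 • x.2).sum‖ ≤
        (l.map Prod.fst).sum - (l'.map Prod.fst).sum := by
  induction h with
  | slnil => intro _; simp
  | @cons l₁ l₂ a h ih =>
      intro hl
      obtain ⟨c0, c1, c2, c3⟩ := ih (fun x hx => hl x (List.mem_cons_of_mem a hx))
      obtain ⟨ha0, ha1⟩ := hl a List.mem_cons_self
      have hna : ‖a.1 • a.2‖ ≤ a.1 := by
        rw [norm_smul, Real.norm_eq_abs, abs_of_nonneg ha0]
        nlinarith
      refine ⟨c0, by simp; linarith, c2, ?_⟩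
      simp only [List.map_cons, List.sum_cons]
      calc ‖a.1 • a.2 + (l₂.map fun x => x.1 • x.2).sum - (l₁.map fun x => x.1 • x.2).sum‖
          ≤ ‖a.1 • a.2‖ + ‖(l₂.map fun x => x.1 • x.2).sum - (l₁.map fun x => x.1 • x.2).sum‖ := by
            rw [add_sub_assoc]; exact norm_add_le _ _
        _ ≤ a.1 + ((l₂.map Prod.fst).sum - (l₁.map Prod.fst).sum) := add_le_add hna c3
        _ = a.1 + (l₂.map Prod.fst).sum - (l₁.map Prod.fst).sum := by ring
  | @cons_cons l₁ l₂ a h ih =>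
      intro hl
      obtain ⟨c0, c1, c2, c3⟩ := ih (fun x hx => hl x (List.mem_cons_of_mem a hx))
      obtain ⟨ha0, ha1⟩ := hl a List.mem_cons_self
      have hna : ‖a.1 • a.2‖ ≤ a.1 := by
        rw [norm_smul, Real.norm_eq_abs, abs_of_nonneg ha0]
        nlinarith
      simp only [List.map_cons, List.sum_cons]
      refine ⟨by linarith, by linarith, ?_, ?_⟩
      · calc ‖a.1 • a.2 + (l₁.map fun x => x.1 • x.2).sum‖
            ≤ ‖a.1 • a.2‖ + ‖(l₁.map fun x => x.1 • x.2).sum‖ := norm_add_le _ _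
          _ ≤ a.1 + (l₁.map Prod.fst).sum := add_le_add hna c2
      · have : a.1 • a.2 + (l₂.map fun x => x.1 • x.2).sum -
            (a.1 • a.2 + (l₁.map fun x => x.1 • x.2).sum) =
            (l₂.map fun x => x.1 • x.2).sum - (l₁.map fun x => x.1 • x.2).sum := by abel
        rw [this]
        calc ‖(l₂.map fun x => x.1 • x.2).sum - (l₁.map fun x => x.1 • x.2).sum‖
            ≤ (l₂.map Prod.fst).sum - (l₁.map Prod.fst).sum := c3
          _ = a.1 + (l₂.map Prod.fst).sum - (a.1 + (l₁.map Prod.fst).sum) := by ring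

/-- Core lemma: a conical bicombing is linear along sums of multiples of extreme points,
provided all partial sums stay in `A`. -/
lemma bicombing_linear_list {V : Type*} [NormedAddCommGroup V] [NormedSpace ℝ V]
    (A : Set V) (σ : V → V → ℝ → V)
    (h0 : ∀ p ∈ A, ∀ q ∈ A, σ p q 0 = p)
    (hgeo : ∀ p ∈ A, ∀ q ∈ A, ∀ s ∈ Set.Icc (0:ℝ) 1, ∀ t ∈ Set.Icc (0:ℝ) 1,
      ‖σ p q s - σ p q t‖ = |s - t| * ‖p - q‖)
    (hcon : ∀ p ∈ A, ∀ q ∈ A, ∀ p' ∈ A, ∀ q' ∈ A, ∀ t ∈ Set.Icc (0:ℝ) 1,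
      ‖σ p q t - σ p' q' t‖ ≤ (1 - t) * ‖p - p'‖ + t * ‖q - q'‖) :
    ∀ l : List (ℝ × V),
      (∀ x ∈ l, 0 ≤ x.1 ∧ x.2 ∈ Set.extremePoints ℝ (Metric.closedBall (0:V) 1)) →
      ∀ p : V, (∀ l' : List (ℝ × V), l'.Sublist l → p + (l'.map fun x => x.1 • x.2).sum ∈ A) →
      ∀ t ∈ Set.Icc (0:ℝ) 1,
        σ p (p + (l.map fun x => x.1 • x.2).sum) t = p + t • (l.map fun x => x.1 • x.2).sum := by
  intro l
  induction l with
  | nil =>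
      intro _ p hp t ht
      have hpA : p ∈ A := by simpa using hp [] (List.nil_sublist [])
      have key := hgeo p hpA p hpA t ht 0 ⟨le_refl 0, zero_le_one⟩
      simp only [sub_self, norm_zero, mul_zero] at key
      have : σ p p t = σ p p 0 := by
        rw [← sub_eq_zero]; exact norm_eq_zero.mp key
      simp only [List.map_nil, List.sum_nil, add_zero, smul_zero]
      rw [this, h0 p hpA p hpA]
  | cons a l ih =>
      intro hent p hp t ht
      obtain ⟨hc0, he⟩ := hent a List.mem_cons_self
      obtain ⟨c, e⟩ := a
      simp only at hc0 he
      set w : V := (l.map fun x => x.1 • x.2).sum with hw_def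
      set q : V := p + (c • e + w) with hq_def
      -- memberships
      have hpA : p ∈ A := by simpa using hp [] (List.nil_sublist _)
      have hqA : q ∈ A := by
        have := hp ((c, e) :: l) (List.Sublist.refl _)
        simpa [hq_def, hw_def] using this
      have hpwA : p + w ∈ A := hp l (List.sublist_cons_self (c, e) l)
      have hpaA : p + c • e ∈ A := by
        have := hp [(c, e)] ((List.nil_sublist l).cons₂ (c, e))
        simpa using this
      -- induction hypotheses
      have hlent : ∀ x ∈ l, 0 ≤ x.1 ∧ x.2 ∈ Set.extremePoints ℝ (Metric.closedBall (0:V) 1) :=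
        fun x hx => hent x (List.mem_cons_of_mem _ hx)
      have IH1 : σ p (p + w) t = p + t • w :=
        ih hlent p (fun l' hl' => hp l' (hl'.cons (c, e))) t ht
      have IH2 : σ (p + c • e) (p + c • e + w) t = p + c • e + t • w := by
        refine ih hlent (p + c • e) (fun l' hl' => ?_) t ht
        have := hp ((c, e) :: l') (hl'.cons₂ (c, e))
        simpa [add_assoc] using this
      have hq_eq : q = p + c • e + w := by rw [hq_def]; abel
      -- conical estimates
      have hB := hcon p hpA q hqA p hpA (p + w) hpwA t ht
      have hC := hcon p hpA q hqA (p + c • e) hpaA q hqA t ht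
      rw [IH1] at hB
      rw [hq_eq, IH2, ← hq_eq] at hC
      have hqpw : q - (p + w) = c • e := by rw [hq_def]; abel
      have hppa : p - (p + c • e) = -(c • e) := by abel
      rw [hqpw] at hB
      rw [hppa, sub_self, norm_neg] at hC
      simp only [sub_self, norm_zero, mul_zero, zero_add, norm_zero, add_zero] at hB hC
      -- apply extreme point uniqueness to η = σ p q t - (p + t • w)
      set η : V := σ p q t - (p + t • w) with hη_def
      have hnce : ‖c • e‖ = c * ‖e‖ := by
        rw [norm_smul, Real.norm_eq_abs, abs_of_nonneg hc0]
      have hb1 : ‖η‖ ≤ t * (c * ‖e‖) := by rw [← hnce]; exact hB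
      have hb2 : ‖c • e - η‖ ≤ (1 - t) * (c * ‖e‖) := by
        have : c • e - η = (p + c • e + t • w) - σ p q t := by rw [hη_def]; abel
        rw [this, norm_sub_rev, ← hnce]
        exact hC
      have hη := extreme_unique_aux he hc0 ht.1 ht.2 hb1 hb2
      -- conclude
      have hσ : σ p q t = p + t • w + (t * c) • e := by
        have : σ p q t = η + (p + t • w) := by rw [hη_def]; abel
        rw [this, hη]; abel
      simp only [List.map_cons, List.sum_cons, ← hw_def, ← hq_def]
      rw [hσ, smul_add, smul_smul]
      abel

set_option maxHeartbeats 2000000 in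
/-- Theorem 1.3: in a normed space whose closed unit ball is the closed convex
hull of its extreme points, any conical geodesic bicombing on a set `A`
containing `B(p₀,2r)` is linear on `B(p₀,r)`. -/
theorem bicombing_linear_on_ball
    {V : Type*} [NormedAddCommGroup V] [NormedSpace ℝ V]
    (hV : Metric.closedBall (0:V) 1 =
      closure (convexHull ℝ (Set.extremePoints ℝ (Metric.closedBall (0:V) 1))))
    (A : Set V) (σ : V → V → ℝ → V)
    (hmem : ∀ p ∈ A, ∀ q ∈ A, ∀ t ∈ Set.Icc (0:ℝ) 1, σ p q t ∈ A)
    (h0 : ∀ p ∈ A, ∀ q ∈ A, σ p q 0 = p)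
    (h1 : ∀ p ∈ A, ∀ q ∈ A, σ p q 1 = q)
    (hgeo : ∀ p ∈ A, ∀ q ∈ A, ∀ s ∈ Set.Icc (0:ℝ) 1, ∀ t ∈ Set.Icc (0:ℝ) 1,
      ‖σ p q s - σ p q t‖ = |s - t| * ‖p - q‖)
    (hcon : ∀ p ∈ A, ∀ q ∈ A, ∀ p' ∈ A, ∀ q' ∈ A, ∀ t ∈ Set.Icc (0:ℝ) 1,
      ‖σ p q t - σ p' q' t‖ ≤ (1 - t) * ‖p - p'‖ + t * ‖q - q'‖)
    (p₀ : V) (hp₀ : p₀ ∈ A) (r : ℝ) (hr : 0 ≤ r)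
    (hball : Metric.closedBall p₀ (2*r) ⊆ A) :
    ∀ p ∈ Metric.closedBall p₀ r, ∀ q ∈ Metric.closedBall p₀ r,
      ∀ t ∈ Set.Icc (0:ℝ) 1, σ p q t = (1 - t) • p + t • q := by
  intro p hp q hq t ht
  have hrsub : Metric.closedBall p₀ r ⊆ A := fun x hx =>
    hball (Metric.closedBall_subset_closedBall (by linarith) hx)
  have hpA : p ∈ A := hrsub hp
  have hqA : q ∈ A := hrsub hq
  by_cases hpq : q = p
  · subst hpq
    have hlin := bicombing_linear_list A σ h0 hgeo hcon [] (by simp) q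
      (fun l' hl' => by
        rw [List.sublist_nil.mp hl']; simpa using hqA) t ht
    simp only [List.map_nil, List.sum_nil, add_zero, smul_zero] at hlin
    rw [hlin]
    module
  · have hd : (0:ℝ) < ‖q - p‖ := by
      rw [norm_pos_iff, sub_ne_zero]; exact hpq
    set d := ‖q - p‖ with hd_def
    have hd2r : d ≤ 2 * r := by
      have h1 : dist q p₀ ≤ r := hq
      have h2 : dist p p₀ ≤ r := hp
      calc d = dist q p := (dist_eq_norm q p).symm
        _ ≤ dist q p₀ + dist p₀ p := dist_triangle q p₀ p
        _ ≤ r + r := add_le_add h1 (by rwa [dist_comm])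
        _ = 2 * r := by ring
    have key : ∀ δ : ℝ, 0 < δ → ‖σ p q t - ((1 - t) • p + t • q)‖ ≤ δ := by
      intro δ hδ
      set ε := min (δ / (6 * d)) (1/2) with hε_def
      have hεpos : 0 < ε := lt_min (div_pos hδ (by linarith)) (by norm_num)
      have hεhalf : ε ≤ 1/2 := min_le_right _ _
      have hεδ : ε ≤ δ / (6 * d) := min_le_left _ _
      set θ := 1 - 2 * ε with hθ_def
      have hθ0 : 0 ≤ θ := by rw [hθ_def]; linarith
      have hθ1 : θ ≤ 1 := by rw [hθ_def]; linarith
      -- the unit vector in direction q - p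
      set u₀ : V := d⁻¹ • (q - p) with hu₀_def
      have hu₀ball : u₀ ∈ Metric.closedBall (0:V) 1 := by
        rw [Metric.mem_closedBall, dist_eq_norm, sub_zero, hu₀_def, norm_smul,
          Real.norm_eq_abs, abs_of_nonneg (inv_nonneg.mpr hd.le), ← hd_def,
          inv_mul_cancel₀ (ne_of_gt hd)]
      rw [hV] at hu₀ball
      obtain ⟨z, hz, hdz⟩ := Metric.mem_closure_iff.mp hu₀ball ε hεpos
      rw [_root_.convexHull_eq] at hz
      obtain ⟨ι, s, wt, f, hw0, hw1, hf, hcm⟩ := hz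
      set l : List (ℝ × V) := s.toList.map (fun i => (θ * d * wt i, f i)) with hl_def
      -- entries of l
      have hent : ∀ x ∈ l, 0 ≤ x.1 ∧ x.2 ∈ Set.extremePoints ℝ (Metric.closedBall (0:V) 1) := by
        intro x hx
        rw [hl_def, List.mem_map] at hx
        obtain ⟨i, hi, rfl⟩ := hx
        have his : i ∈ s := by rwa [← Finset.mem_toList]
        exact ⟨mul_nonneg (mul_nonneg hθ0 hd.le) (hw0 i his), hf i his⟩
      have hent' : ∀ x ∈ l, 0 ≤ x.1 ∧ ‖x.2‖ ≤ 1 := by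
        intro x hx
        obtain ⟨hx1, hx2⟩ := hent x hx
        refine ⟨hx1, ?_⟩
        have := hx2.1
        simpa [Metric.mem_closedBall, dist_eq_norm] using this
      -- sums over l
      have hSl : (l.map fun x => x.1 • x.2).sum = (θ * d) • z := by
        have hmap : (l.map fun x => x.1 • x.2) =
            s.toList.map (fun i => (θ * d * wt i) • f i) := by
          rw [hl_def, List.map_map]; rfl
        rw [hmap, Finset.sum_map_toList, ← hcm, Finset.centerMass_eq_of_sum_1 _ _ hw1,
          Finset.smul_sum]
        exact Finset.sum_congr rfl (fun i _ => by rw [smul_smul, mul_assoc])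
      have hCl : (l.map Prod.fst).sum = θ * d := by
        have hmap : (l.map Prod.fst) = s.toList.map (fun i => θ * d * wt i) := by
          rw [hl_def, List.map_map]; rfl
        rw [hmap, Finset.sum_map_toList, ← Finset.mul_sum, hw1, mul_one]
      -- distance estimates
      have hzu : ‖z - u₀‖ < ε := by
        rw [← dist_eq_norm, dist_comm]; exact hdz
      have hdu : (θ * d) • u₀ = θ • (q - p) := by
        rw [hu₀_def, smul_smul, mul_assoc, mul_inv_cancel₀ (ne_of_gt hd), mul_one]
      have hq'b : ‖p + (θ * d) • z - p₀‖ ≤ r + ε * d := by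
        have hsplit : p + (θ * d) • z - p₀ =
            (p - p₀ + θ • (q - p)) + (θ * d) • (z - u₀) := by
          rw [smul_sub (θ * d) z u₀, hdu]; abel
        have hfirst : ‖p - p₀ + θ • (q - p)‖ ≤ r := by
          have hid : p - p₀ + θ • (q - p) = (1 - θ) • (p - p₀) + θ • (q - p₀) := by module
          rw [hid]
          calc ‖(1 - θ) • (p - p₀) + θ • (q - p₀)‖
              ≤ ‖(1 - θ) • (p - p₀)‖ + ‖θ • (q - p₀)‖ := norm_add_le _ _
            _ = (1 - θ) * ‖p - p₀‖ + θ * ‖q - p₀‖ := by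
                rw [norm_smul, norm_smul, Real.norm_eq_abs, Real.norm_eq_abs,
                  abs_of_nonneg (by linarith), abs_of_nonneg hθ0]
            _ ≤ (1 - θ) * r + θ * r := by
                have hpn : ‖p - p₀‖ ≤ r := by
                  rw [← dist_eq_norm]; exact hp
                have hqn : ‖q - p₀‖ ≤ r := by
                  rw [← dist_eq_norm]; exact hq
                have h1θ : (0:ℝ) ≤ 1 - θ := by linarith
                nlinarith
            _ = r := by ring
        have hsecond : ‖(θ * d) • (z - u₀)‖ ≤ ε * d := by
          rw [norm_smul, Real.norm_eq_abs, abs_of_nonneg (mul_nonneg hθ0 hd.le)]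
          have e1 : θ * d * ‖z - u₀‖ ≤ θ * d * ε :=
            mul_le_mul_of_nonneg_left hzu.le (mul_nonneg hθ0 hd.le)
          have e2 : θ * d * ε ≤ 1 * d * ε := by
            have := mul_nonneg (mul_nonneg (sub_nonneg.mpr hθ1) hd.le) hεpos.le
            nlinarith
          calc θ * d * ‖z - u₀‖ ≤ 1 * d * ε := le_trans e1 e2
            _ = ε * d := by ring
        calc ‖p + (θ * d) • z - p₀‖
            = ‖(p - p₀ + θ • (q - p)) + (θ * d) • (z - u₀)‖ := by rw [hsplit]
          _ ≤ ‖p - p₀ + θ • (q - p)‖ + ‖(θ * d) • (z - u₀)‖ := norm_add_le _ _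
          _ ≤ r + ε * d := add_le_add hfirst hsecond
      -- membership of all partial sums
      have hmemA : ∀ l' : List (ℝ × V), l'.Sublist l →
          p + (l'.map fun x => x.1 • x.2).sum ∈ A := by
        intro l' hl'
        obtain ⟨c0, c1, c2, c3⟩ := sublist_sum_bound hl' hent'
        rw [hCl] at c1 c3
        apply hball
        rw [Metric.mem_closedBall, dist_eq_norm]
        by_cases hcase : 2 * (l'.map Prod.fst).sum ≤ θ * d
        · calc ‖p + (l'.map fun x => x.1 • x.2).sum - p₀‖
              ≤ ‖p - p₀‖ + ‖(l'.map fun x => x.1 • x.2).sum‖ := by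
                have : p + (l'.map fun x => x.1 • x.2).sum - p₀ =
                    (p - p₀) + (l'.map fun x => x.1 • x.2).sum := by abel
                rw [this]; exact norm_add_le _ _
            _ ≤ r + (l'.map Prod.fst).sum := by
                have hpn : ‖p - p₀‖ ≤ r := by rw [← dist_eq_norm]; exact hp
                linarith
            _ ≤ 2 * r := by nlinarith
        · push_neg at hcase
          calc ‖p + (l'.map fun x => x.1 • x.2).sum - p₀‖
              ≤ ‖p + (θ * d) • z - p₀‖ +
                ‖(l.map fun x => x.1 • x.2).sum - (l'.map fun x => x.1 • x.2).sum‖ := by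
                have : p + (l'.map fun x => x.1 • x.2).sum - p₀ =
                    (p + (θ * d) • z - p₀) -
                    ((l.map fun x => x.1 • x.2).sum - (l'.map fun x => x.1 • x.2).sum) := by
                  rw [← hSl]; abel
                rw [this]; exact norm_sub_le _ _
            _ ≤ (r + ε * d) + (θ * d - (l'.map Prod.fst).sum) := add_le_add hq'b c3
            _ ≤ 2 * r := by
                have hexp : ε * d + θ * d / 2 = d / 2 := by rw [hθ_def]; ring
                nlinarith
      -- apply the core lemma
      have hlin := bicombing_linear_list A σ h0 hgeo hcon l hent p hmemA t ht
      rw [hSl] at hlin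
      have hq'A : p + (θ * d) • z ∈ A := by
        have := hmemA l (List.Sublist.refl l)
        rwa [hSl] at this
      -- distance from q to q'
      have hqq' : ‖q - (p + (θ * d) • z)‖ ≤ 3 * (ε * d) := by
        have hsplit : q - (p + (θ * d) • z) = (1 - θ) • (q - p) + (θ * d) • (u₀ - z) := by
          rw [smul_sub (θ * d) u₀ z, hdu]; module
        calc ‖q - (p + (θ * d) • z)‖
            ≤ ‖(1 - θ) • (q - p)‖ + ‖(θ * d) • (u₀ - z)‖ := by
              rw [hsplit]; exact norm_add_le _ _
          _ = (1 - θ) * d + θ * d * ‖u₀ - z‖ := by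
              rw [norm_smul, norm_smul, Real.norm_eq_abs, Real.norm_eq_abs,
                abs_of_nonneg (by linarith), abs_of_nonneg (mul_nonneg hθ0 hd.le), ← hd_def]
          _ ≤ 2 * ε * d + 1 * d * ε := by
              rw [norm_sub_rev] at hzu
              have h1 : (1 - θ) * d = 2 * ε * d := by rw [hθ_def]; ring
              have e1 : θ * d * ‖u₀ - z‖ ≤ θ * d * ε :=
                mul_le_mul_of_nonneg_left hzu.le (mul_nonneg hθ0 hd.le)
              have e2 : θ * d * ε ≤ 1 * d * ε := by
                have := mul_nonneg (mul_nonneg (sub_nonneg.mpr hθ1) hd.le) hεpos.le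
                nlinarith
              linarith
          _ = 3 * (ε * d) := by ring
      -- conclude
      have hfin := hcon p hpA q hqA p hpA (p + (θ * d) • z) hq'A t ht
      rw [hlin] at hfin
      simp only [sub_self, norm_zero, mul_zero, zero_add] at hfin
      have hsecond : ‖(p + t • ((θ * d) • z)) - ((1 - t) • p + t • q)‖ ≤ 3 * (ε * d) := by
        have hid : (p + t • ((θ * d) • z)) - ((1 - t) • p + t • q) =
            t • ((p + (θ * d) • z) - q) := by module
        rw [hid, norm_smul, Real.norm_eq_abs, abs_of_nonneg ht.1, norm_sub_rev]
        nlinarith [ht.2, norm_nonneg (q - (p + (θ * d) • z)), hqq',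
          mul_nonneg hεpos.le hd.le]
      have hfirst : ‖σ p q t - (p + t • ((θ * d) • z))‖ ≤ 3 * (ε * d) := by
        calc ‖σ p q t - (p + t • ((θ * d) • z))‖
            ≤ t * ‖q - (p + (θ * d) • z)‖ := hfin
          _ ≤ 3 * (ε * d) := by
              nlinarith [ht.1, ht.2, norm_nonneg (q - (p + (θ * d) • z)),
                mul_nonneg hεpos.le hd.le]
      have h6 : ε * (6 * d) ≤ δ := by
        rw [← le_div_iff₀ (by linarith)]
        exact hεδ
      calc ‖σ p q t - ((1 - t) • p + t • q)‖
          ≤ ‖σ p q t - (p + t • ((θ * d) • z))‖ +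
            ‖(p + t • ((θ * d) • z)) - ((1 - t) • p + t • q)‖ := norm_sub_le_norm_sub_add_norm_sub _ _ _
        _ ≤ 3 * (ε * d) + 3 * (ε * d) := add_le_add hfirst hsecond
        _ = ε * (6 * d) := by ring
        _ ≤ δ := h6
    have hle : ‖σ p q t - ((1 - t) • p + t • q)‖ ≤ 0 := by
      refine le_of_forall_pos_le_add (fun ε hε => ?_)
      rw [zero_add]
      exact key ε hε
    have : σ p q t - ((1 - t) • p + t • q) = 0 :=
      norm_le_zero_iff.mp hle
    exact sub_eq_zero.mp this
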